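/- Let ς : T × ℝ^l → ℝ be a function on pairs of n×l right stochastic matrices and vectors in ℝ^l. Suppose (1) for all T and v, w: T·v = T·w implies ς(T,v) = ς(T,w), and (2) for all T, T' and v: T·v = T'·v implies ς(T,v) = ς(T',v). Then for all T, T', v, w: T·v = T'·w implies ς(T,v) = ς(T',w). -/
import Mathlib

open Matrix Finset

def RightStochastic {n l : ℕ} (T : Matrix (Fin n) (Fin l) ℝ) : Prop :=
  (∀ i j, 0 ≤ T i j) ∧ ∀ i, ∑ j, T i j = 1

namespace StochAux

lemma exists_combo (x y t : ℝ) (hx : x ≤ t) (hy : t ≤ y) :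
    ∃ θ : ℝ, 0 ≤ θ ∧ θ ≤ 1 ∧ θ * x + (1 - θ) * y = t := by
  rcases eq_or_lt_of_le (hx.trans hy) with h | h
  · refine ⟨1, zero_le_one, le_refl 1, ?_⟩
    have : t = x := le_antisymm (h ▸ hy) hx
    simp [this]
  · refine ⟨(y - t) / (y - x), div_nonneg (by linarith) (by linarith), ?_, ?_⟩
    · rw [div_le_one (by linarith)]; linarith
    · have hyx : y - x ≠ 0 := by linarith
      field_simp
      ring

noncomputable def delta {l : ℕ} (g : Fin l) : Fin l → ℝ := fun j => if j = g then 1 else 0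

lemma delta_nonneg {l : ℕ} (g j : Fin l) : 0 ≤ delta g j := by
  unfold delta; split <;> norm_num

lemma delta_sum {l : ℕ} (g : Fin l) : ∑ j, delta g j = 1 := by
  simp [delta]

lemma delta_dot {l : ℕ} (g : Fin l) (u : Fin l → ℝ) : ∑ j, delta g j * u j = u g := by
  simp [delta, ite_mul]

lemma combo_dot {l : ℕ} (θ : ℝ) (a c : Fin l) (z : Fin l → ℝ) :
    ∑ j, (θ * delta a j + (1 - θ) * delta c j) * z j = θ * z a + (1 - θ) * z c := by
  have h : ∀ j, (θ * delta a j + (1 - θ) * delta c j) * z j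
      = θ * (delta a j * z j) + (1 - θ) * (delta c j * z j) := fun j => by ring
  simp only [h]
  rw [Finset.sum_add_distrib, ← Finset.mul_sum, ← Finset.mul_sum, delta_dot, delta_dot]

lemma combo_nonneg {l : ℕ} {θ : ℝ} (h0 : 0 ≤ θ) (h1 : θ ≤ 1) (a c j : Fin l) :
    0 ≤ θ * delta a j + (1 - θ) * delta c j :=
  add_nonneg (mul_nonneg h0 (delta_nonneg a j)) (mul_nonneg (by linarith) (delta_nonneg c j))

lemma combo_sum {l : ℕ} (θ : ℝ) (a c : Fin l) :
    ∑ j, (θ * delta a j + (1 - θ) * delta c j) = 1 := by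
  rw [Finset.sum_add_distrib, ← Finset.mul_sum, ← Finset.mul_sum, delta_sum, delta_sum]
  ring

noncomputable def Rmat {n l : ℕ} (lam : Fin n → ℝ) (p q : Fin l → ℝ) :
    Matrix (Fin n) (Fin l) ℝ := fun i j => lam i * p j + (1 - lam i) * q j

lemma Rmat_stoch {n l : ℕ} {lam : Fin n → ℝ} {p q : Fin l → ℝ}
    (hlam0 : ∀ i, 0 ≤ lam i) (hlam1 : ∀ i, lam i ≤ 1)
    (hp0 : ∀ j, 0 ≤ p j) (hp1 : ∑ j, p j = 1)
    (hq0 : ∀ j, 0 ≤ q j) (hq1 : ∑ j, q j = 1) :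
    RightStochastic (Rmat lam p q) := by
  constructor
  · intro i j
    have := hlam0 i; have := hlam1 i
    exact add_nonneg (mul_nonneg (hlam0 i) (hp0 j))
      (mul_nonneg (by linarith) (hq0 j))
  · intro i
    unfold Rmat
    rw [Finset.sum_add_distrib, ← Finset.mul_sum, ← Finset.mul_sum, hp1, hq1]
    ring

lemma Rmat_mulVec {n l : ℕ} {lam : Fin n → ℝ} {p q : Fin l → ℝ} {b : Fin n → ℝ}
    {m Mx : ℝ} {u : Fin l → ℝ}
    (hlamb : ∀ i, lam i * m + (1 - lam i) * Mx = b i)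
    (hp : ∑ j, p j * u j = m) (hq : ∑ j, q j * u j = Mx) :
    (Rmat lam p q).mulVec u = b := by
  funext i
  have h : ∀ j, (lam i * p j + (1 - lam i) * q j) * u j
      = lam i * (p j * u j) + (1 - lam i) * (q j * u j) := fun j => by ring
  have : (Rmat lam p q).mulVec u i = ∑ j, (lam i * p j + (1 - lam i) * q j) * u j := by
    simp [Matrix.mulVec, dotProduct, Rmat]
  rw [this]
  simp only [h]
  rw [Finset.sum_add_distrib, ← Finset.mul_sum, ← Finset.mul_sum, hp, hq, hlamb i]

lemma exists_ne_ne {l : ℕ} (hl : 3 ≤ l) (a c : Fin l) : ∃ g : Fin l, g ≠ a ∧ g ≠ c := by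
  by_contra h
  push_neg at h
  have hsub : (univ : Finset (Fin l)) ⊆ {a, c} := by
    intro x _
    rcases eq_or_ne x a with h' | h'
    · simp [h']
    · simp [h x h']
  have h1 := Finset.card_le_card hsub
  have h2 : ({a, c} : Finset (Fin l)).card ≤ 2 :=
    le_trans (Finset.card_insert_le a {c}) (by simp)
  simp [Finset.card_univ] at h1
  omega

lemma stoch_row_bound {n l : ℕ} (S : Matrix (Fin n) (Fin l) ℝ) (hS : RightStochastic S)
    (u : Fin l → ℝ) (a c : Fin l) (ha : ∀ j, u a ≤ u j) (hc : ∀ j, u j ≤ u c) (i : Fin n) :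
    u a ≤ S.mulVec u i ∧ S.mulVec u i ≤ u c := by
  have h : S.mulVec u i = ∑ j, S i j * u j := by simp [Matrix.mulVec, dotProduct]
  constructor
  · calc u a = ∑ j, S i j * u a := by rw [← Finset.sum_mul, hS.2 i, one_mul]
      _ ≤ ∑ j, S i j * u j :=
        Finset.sum_le_sum fun j _ => mul_le_mul_of_nonneg_left (ha j) (hS.1 i j)
      _ = S.mulVec u i := h.symm
  · calc S.mulVec u i = ∑ j, S i j * u j := h
      _ ≤ ∑ j, S i j * u c :=
        Finset.sum_le_sum fun j _ => mul_le_mul_of_nonneg_left (hc j) (hS.1 i j)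
      _ = u c := by rw [← Finset.sum_mul, hS.2 i, one_mul]

end StochAux

open StochAux

theorem stmt_0 (n l : ℕ) (hn : 1 ≤ n) (hl : 3 ≤ l)
    (ς : Matrix (Fin n) (Fin l) ℝ → (Fin l → ℝ) → ℝ)
    (h1 : ∀ T, RightStochastic T → ∀ v w : Fin l → ℝ,
      T.mulVec v = T.mulVec w → ς T v = ς T w)
    (h2 : ∀ T T', RightStochastic T → RightStochastic T' → ∀ v : Fin l → ℝ,
      T.mulVec v = T'.mulVec v → ς T v = ς T' v) :
    ∀ T T', RightStochastic T → RightStochastic T' → ∀ v w : Fin l → ℝ,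
      T.mulVec v = T'.mulVec w → ς T v = ς T' w := by
  classical
  intro T T' hT hT' v w hvw
  haveI : NeZero n := ⟨by omega⟩
  haveI : NeZero l := ⟨by omega⟩
  set b : Fin n → ℝ := T.mulVec v with hbdef
  have hb' : T'.mulVec w = b := hvw.symm
  have hne : (univ : Finset (Fin n)).Nonempty := univ_nonempty
  set m : ℝ := univ.inf' hne b with hmdef
  set Mx : ℝ := univ.sup' hne b with hMdef
  have hmb : ∀ i, m ≤ b i := fun i => inf'_le _ (mem_univ i)
  have hbM : ∀ i, b i ≤ Mx := fun i => le_sup' _ (mem_univ i)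
  have hmM : m ≤ Mx := (hmb (Classical.arbitrary _)).trans (hbM _)
  set lam : Fin n → ℝ := fun i => if m = Mx then 1 else (Mx - b i) / (Mx - m) with hlamdef
  have hlam0 : ∀ i, 0 ≤ lam i := by
    intro i
    rw [hlamdef]
    by_cases h : m = Mx
    · simp [h]
    · have hlt : m < Mx := lt_of_le_of_ne hmM h
      simp only [h, if_false]
      exact div_nonneg (by linarith [hbM i]) (by linarith)
  have hlam1 : ∀ i, lam i ≤ 1 := by
    intro i
    rw [hlamdef]
    by_cases h : m = Mx
    · simp [h]
    · have hlt : m < Mx := lt_of_le_of_ne hmM h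
      simp only [h, if_false]
      rw [div_le_one (by linarith)]
      linarith [hmb i]
  have hlamb : ∀ i, lam i * m + (1 - lam i) * Mx = b i := by
    intro i
    rw [hlamdef]
    by_cases h : m = Mx
    · have h1' : b i = m := le_antisymm (h ▸ hbM i) (hmb i)
      simp [h, h1']
    · have hlt : m < Mx := lt_of_le_of_ne hmM h
      have hne' : Mx - m ≠ 0 := by linarith
      simp only [h, if_false]
      field_simp
      ring
  -- reduction of one side to canonical form
  have side : ∀ (S : Matrix (Fin n) (Fin l) ℝ) (u : Fin l → ℝ),
      RightStochastic S → S.mulVec u = b →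
      ∃ g : Fin l, ∀ e : Fin l, e ≠ g →
        ς S u = ς (Rmat lam (delta g) (delta e)) (fun j => if j = g then m else Mx) := by
    intro S u hS hSu
    obtain ⟨a, -, ha⟩ := Finset.exists_min_image univ u univ_nonempty
    obtain ⟨c, -, hc⟩ := Finset.exists_max_image univ u univ_nonempty
    have hbu : ∀ i, u a ≤ b i ∧ b i ≤ u c := by
      intro i
      have := stoch_row_bound S hS u a c (fun j => ha j (mem_univ j))
        (fun j => hc j (mem_univ j)) i
      rw [hSu] at this
      exact this
    have ham : u a ≤ m := le_inf' hne _ fun i _ => (hbu i).1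
    have hMc : Mx ≤ u c := sup'_le hne _ fun i _ => (hbu i).2
    obtain ⟨θ₁, hθ₁0, hθ₁1, hθ₁⟩ := exists_combo (u a) (u c) m ham (hmM.trans hMc)
    obtain ⟨θ₂, hθ₂0, hθ₂1, hθ₂⟩ := exists_combo (u a) (u c) Mx (ham.trans hmM) hMc
    set p₁ : Fin l → ℝ := fun j => θ₁ * delta a j + (1 - θ₁) * delta c j with hp₁def
    set q₁ : Fin l → ℝ := fun j => θ₂ * delta a j + (1 - θ₂) * delta c j with hq₁def
    have hp₁0 : ∀ j, 0 ≤ p₁ j := fun j => combo_nonneg hθ₁0 hθ₁1 a c j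
    have hq₁0 : ∀ j, 0 ≤ q₁ j := fun j => combo_nonneg hθ₂0 hθ₂1 a c j
    have hp₁1 : ∑ j, p₁ j = 1 := combo_sum θ₁ a c
    have hq₁1 : ∑ j, q₁ j = 1 := combo_sum θ₂ a c
    obtain ⟨g, hga, hgc⟩ := exists_ne_ne hl a c
    refine ⟨g, fun e he => ?_⟩
    set z₁ : Fin l → ℝ := fun j => if j = g then m else u j with hz₁def
    set z₂ : Fin l → ℝ := fun j => if j = g then m else Mx with hz₂def
    have hz₁a : z₁ a = u a := if_neg (fun h => hga h.symm)
    have hz₁c : z₁ c = u c := if_neg (fun h => hgc h.symm)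
    have hz₂a : z₂ a = Mx := if_neg (fun h => hga h.symm)
    have hz₂c : z₂ c = Mx := if_neg (fun h => hgc h.symm)
    have hp₁u : ∑ j, p₁ j * u j = m := by rw [hp₁def]; rw [combo_dot]; exact hθ₁
    have hq₁u : ∑ j, q₁ j * u j = Mx := by rw [hq₁def]; rw [combo_dot]; exact hθ₂
    have hp₁z₁ : ∑ j, p₁ j * z₁ j = m := by
      rw [hp₁def, combo_dot, hz₁a, hz₁c]; exact hθ₁
    have hq₁z₁ : ∑ j, q₁ j * z₁ j = Mx := by
      rw [hq₁def, combo_dot, hz₁a, hz₁c]; exact hθ₂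
    have hq₁z₂ : ∑ j, q₁ j * z₂ j = Mx := by
      rw [hq₁def, combo_dot, hz₂a, hz₂c]; ring
    have hδgz₁ : ∑ j, delta g j * z₁ j = m := by rw [delta_dot]; simp [hz₁def]
    have hδgz₂ : ∑ j, delta g j * z₂ j = m := by rw [delta_dot]; simp [hz₂def]
    have hδez₂ : ∑ j, delta e j * z₂ j = Mx := by
      rw [delta_dot]; simp [hz₂def, he]
    have hst1 : RightStochastic (Rmat lam p₁ q₁) :=
      Rmat_stoch hlam0 hlam1 hp₁0 hp₁1 hq₁0 hq₁1
    have hst2 : RightStochastic (Rmat lam (delta g) q₁) :=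
      Rmat_stoch hlam0 hlam1 (delta_nonneg g) (delta_sum g) hq₁0 hq₁1
    have hst3 : RightStochastic (Rmat lam (delta g) (delta e)) :=
      Rmat_stoch hlam0 hlam1 (delta_nonneg g) (delta_sum g) (delta_nonneg e) (delta_sum e)
    have m1 : (Rmat lam p₁ q₁).mulVec u = b := Rmat_mulVec hlamb hp₁u hq₁u
    have m2 : (Rmat lam p₁ q₁).mulVec z₁ = b := Rmat_mulVec hlamb hp₁z₁ hq₁z₁
    have m3 : (Rmat lam (delta g) q₁).mulVec z₁ = b := Rmat_mulVec hlamb hδgz₁ hq₁z₁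
    have m4 : (Rmat lam (delta g) q₁).mulVec z₂ = b := Rmat_mulVec hlamb hδgz₂ hq₁z₂
    have m5 : (Rmat lam (delta g) (delta e)).mulVec z₂ = b := Rmat_mulVec hlamb hδgz₂ hδez₂
    calc ς S u = ς (Rmat lam p₁ q₁) u := h2 _ _ hS hst1 u (by rw [hSu, m1])
      _ = ς (Rmat lam p₁ q₁) z₁ := h1 _ hst1 u z₁ (by rw [m1, m2])
      _ = ς (Rmat lam (delta g) q₁) z₁ := h2 _ _ hst1 hst2 z₁ (by rw [m2, m3])
      _ = ς (Rmat lam (delta g) q₁) z₂ := h1 _ hst2 z₁ z₂ (by rw [m3, m4])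
      _ = ς (Rmat lam (delta g) (delta e)) z₂ := h2 _ _ hst2 hst3 z₂ (by rw [m4, m5])
  -- assemble the two sides
  obtain ⟨g₁, hg₁⟩ := side T v hT rfl
  obtain ⟨g₂, hg₂⟩ := side T' w hT' hb'
  by_cases hgg : g₁ = g₂
  · subst hgg
    obtain ⟨e, he, -⟩ := exists_ne_ne hl g₁ g₁
    rw [hg₁ e he, hg₂ e he]
  · obtain ⟨e, he₁, he₂⟩ := exists_ne_ne hl g₁ g₂
    set z₃ : Fin l → ℝ := fun j => if j = e then Mx else m with hz₃def
    set y₁ : Fin l → ℝ := fun j => if j = g₁ then m else Mx with hy₁def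
    set y₂ : Fin l → ℝ := fun j => if j = g₂ then m else Mx with hy₂def
    have hδg₁y₁ : ∑ j, delta g₁ j * y₁ j = m := by rw [delta_dot]; simp [hy₁def]
    have hδey₁ : ∑ j, delta e j * y₁ j = Mx := by rw [delta_dot]; simp [hy₁def, he₁]
    have hδg₂y₂ : ∑ j, delta g₂ j * y₂ j = m := by rw [delta_dot]; simp [hy₂def]
    have hδey₂ : ∑ j, delta e j * y₂ j = Mx := by rw [delta_dot]; simp [hy₂def, he₂]
    have hδg₁z₃ : ∑ j, delta g₁ j * z₃ j = m := by
      rw [delta_dot]; simp [hz₃def, he₁.symm]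
    have hδg₂z₃ : ∑ j, delta g₂ j * z₃ j = m := by
      rw [delta_dot]; simp [hz₃def, he₂.symm]
    have hδez₃ : ∑ j, delta e j * z₃ j = Mx := by rw [delta_dot]; simp [hz₃def]
    have hstA : RightStochastic (Rmat lam (delta g₁) (delta e)) :=
      Rmat_stoch hlam0 hlam1 (delta_nonneg g₁) (delta_sum g₁) (delta_nonneg e) (delta_sum e)
    have hstB : RightStochastic (Rmat lam (delta g₂) (delta e)) :=
      Rmat_stoch hlam0 hlam1 (delta_nonneg g₂) (delta_sum g₂) (delta_nonneg e) (delta_sum e)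
    have mA1 : (Rmat lam (delta g₁) (delta e)).mulVec y₁ = b := Rmat_mulVec hlamb hδg₁y₁ hδey₁
    have mA2 : (Rmat lam (delta g₁) (delta e)).mulVec z₃ = b := Rmat_mulVec hlamb hδg₁z₃ hδez₃
    have mB1 : (Rmat lam (delta g₂) (delta e)).mulVec z₃ = b := Rmat_mulVec hlamb hδg₂z₃ hδez₃
    have mB2 : (Rmat lam (delta g₂) (delta e)).mulVec y₂ = b := Rmat_mulVec hlamb hδg₂y₂ hδey₂
    calc ς T v = ς (Rmat lam (delta g₁) (delta e)) y₁ := hg₁ e he₁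
      _ = ς (Rmat lam (delta g₁) (delta e)) z₃ := h1 _ hstA y₁ z₃ (by rw [mA1, mA2])
      _ = ς (Rmat lam (delta g₂) (delta e)) z₃ := h2 _ _ hstA hstB z₃ (by rw [mA2, mB1])
      _ = ς (Rmat lam (delta g₂) (delta e)) y₂ := h1 _ hstB z₃ y₂ (by rw [mB1, mB2])
      _ = ς T' w := (hg₂ e he₂).symm
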